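/- arXiv:0908.3127 — 3 statements merged into one kernel-verified Lean document; each statement's English description precedes it below -/
import Mathlib

section
/- Any generating set of oriented Reidemeister moves must contain at least two Ω1 moves. Formally: for any single Ω1 move m with effect vector v_m ∈ {(1,−1),(1,1),(−1,−1),(−1,1)} ⊂ ℤ × ℤ, the subgroup of ℤ × ℤ generated by v_m (together with the zero vectors contributed by Ω2 and Ω3 moves) does not contain all four Ω1 effect vectors. -/
lemma closure_le_zmul (v : ℤ × ℤ) :
    AddSubgroup.closure ({v, 0} : Set (ℤ × ℤ)) ≤ AddSubgroup.zmultiples v := by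
  rw [AddSubgroup.closure_le]
  rintro x (rfl | rfl)
  · exact AddSubgroup.mem_zmultiples _
  · exact zero_mem _

/-- Any generating set must contain at least two Ω1 moves: for any single Ω1 effect
vector `v`, the subgroup of `ℤ × ℤ` generated by `v` together with the zero vector
(contributed by Ω2 and Ω3 moves) does not contain all four Ω1 effect vectors. -/
theorem stmt_2 :
    ∀ v ∈ ({(1, -1), (1, 1), (-1, -1), (-1, 1)} : Set (ℤ × ℤ)),
      ¬ (({(1, -1), (1, 1), (-1, -1), (-1, 1)} : Set (ℤ × ℤ)) ⊆
        (AddSubgroup.closure ({v, 0} : Set (ℤ × ℤ)) : Set (ℤ × ℤ))) := by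
  rintro v (rfl | rfl | rfl | rfl) hsub
  · have h := closure_le_zmul _ (hsub (by simp : ((1:ℤ), (1:ℤ)) ∈ _))
    obtain ⟨n, hn⟩ := AddSubgroup.mem_zmultiples_iff.mp h
    rw [Prod.ext_iff] at hn
    simp [Prod.smul_fst, Prod.smul_snd] at hn
    omega
  · have h := closure_le_zmul _ (hsub (by simp : ((1:ℤ), (-1:ℤ)) ∈ _))
    obtain ⟨n, hn⟩ := AddSubgroup.mem_zmultiples_iff.mp h
    rw [Prod.ext_iff] at hn
    simp [Prod.smul_fst, Prod.smul_snd] at hn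
    omega
  · have h := closure_le_zmul _ (hsub (by simp : ((1:ℤ), (-1:ℤ)) ∈ _))
    obtain ⟨n, hn⟩ := AddSubgroup.mem_zmultiples_iff.mp h
    rw [Prod.ext_iff] at hn
    simp [Prod.smul_fst, Prod.smul_snd] at hn
    omega
  · have h := closure_le_zmul _ (hsub (by simp : ((1:ℤ), (1:ℤ)) ∈ _))
    obtain ⟨n, hn⟩ := AddSubgroup.mem_zmultiples_iff.mp h
    rw [Prod.ext_iff] at hn
    simp [Prod.smul_fst, Prod.smul_snd] at hn
    omega
end

section
/- Let a state be a pair of finite lists of signs in {+1,−1} (one for each component of a 2-component tangle). Define a state to be positively weighted if all partial sums of both lists are non-negative. Suppose each allowed move either leaves both lists unchanged or inserts/deletes a consecutive (+1,−1) pair in one or both lists. Then positive weighting of both components is preserved under any finite sequence of allowed moves. In particular, since the trivial tangle state (empty lists) is positively weighted and the state ((−1,+1),(−1,+1)) resulting from Ω2b is not, no sequence of such moves transforms the former into the latter; hence the set consisting of all Ω1 moves, Ω2a, Ω2c (or Ω2d), and Ω3b does not generate Ω2b. -/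
/-- `L'` is obtained from `L` by inserting or deleting a consecutive (+1,−1) pair. -/
def InsDel (L L' : List ℤ) : Prop :=
  (∃ A B : List ℤ, L = A ++ B ∧ L' = A ++ [1, -1] ++ B) ∨
  (∃ A B : List ℤ, L = A ++ [1, -1] ++ B ∧ L' = A ++ B)

/-- An allowed move on a two-component state: leave both lists unchanged, or
insert/delete a consecutive (+1,−1) pair in one or both lists. -/
def AllowedMove (s s' : List ℤ × List ℤ) : Prop :=
  (s' = s) ∨
  (InsDel s.1 s'.1 ∧ s'.2 = s.2) ∨
  (s'.1 = s.1 ∧ InsDel s.2 s'.2) ∨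
  (InsDel s.1 s'.1 ∧ InsDel s.2 s'.2)

/-- A state is positively weighted if all partial sums of both lists are ≥ 0. -/
def PosWeighted (s : List ℤ × List ℤ) : Prop :=
  (∀ n : ℕ, 0 ≤ ((s.1.take n).sum)) ∧ (∀ n : ℕ, 0 ≤ ((s.2.take n).sum))

def PosL (L : List ℤ) : Prop := ∀ n : ℕ, 0 ≤ (L.take n).sum

lemma take_sum_append (A B : List ℤ) (n : ℕ) :
    ((A ++ B).take n).sum = (A.take n).sum + (B.take (n - A.length)).sum := by
  rw [List.take_append, List.sum_append]

lemma posL_insdel {L L' : List ℤ} (h : InsDel L L') (hL : PosL L) : PosL L' := by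
  rcases h with ⟨A, B, rfl, rfl⟩ | ⟨A, B, rfl, rfl⟩
  · intro n
    rw [List.append_assoc, take_sum_append]
    rcases hm : n - A.length with _ | _ | k
    · have h1 := hL n
      rw [take_sum_append, hm] at h1
      simpa using h1
    · have hn : A.length ≤ n := by omega
      have h1 := hL A.length
      rw [take_sum_append, Nat.sub_self, List.take_length] at h1
      simp only [List.take_zero, List.sum_nil, add_zero] at h1
      rw [List.take_of_length_le hn]
      simp only [List.cons_append, List.take_succ_cons, List.take_zero, List.sum_cons,
        List.sum_nil]
      linarith
    · have hn : A.length ≤ n := by omega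
      have h1 := hL (A.length + k)
      rw [take_sum_append, Nat.add_sub_cancel_left,
        List.take_of_length_le (Nat.le_add_right _ _)] at h1
      rw [List.take_of_length_le hn]
      simp only [List.cons_append, List.take_succ_cons, List.sum_cons, List.nil_append]
      linarith
  · intro n
    rw [take_sum_append]
    rw [List.append_assoc] at hL
    by_cases hn : n ≤ A.length
    · have h1 := hL n
      rw [take_sum_append, Nat.sub_eq_zero_of_le hn] at h1
      simpa [Nat.sub_eq_zero_of_le hn] using h1
    · push_neg at hn
      have h1 := hL (n + 2)
      rw [take_sum_append, List.take_of_length_le (by omega : A.length ≤ n + 2)] at h1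
      have h2 : n + 2 - A.length = (n - A.length) + 2 := by omega
      rw [h2] at h1
      rw [List.take_of_length_le hn.le]
      simp only [List.cons_append, List.take_succ_cons, List.sum_cons,
        List.nil_append] at h1
      linarith

/-- Positive weighting of both components is preserved by any finite sequence of
allowed moves; the trivial state is positively weighted while the Ω2b state
`([−1,+1],[−1,+1])` is not, so no sequence of allowed moves transforms the former
into the latter (hence all Ω1 moves, Ω2a, Ω2c (or Ω2d), and Ω3b do not generate Ω2b). -/
theorem stmt_8 :
    (∀ s s' : List ℤ × List ℤ, PosWeighted s →
      Relation.ReflTransGen AllowedMove s s' → PosWeighted s') ∧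
    PosWeighted (([], []) : List ℤ × List ℤ) ∧
    ¬ PosWeighted (([-1, 1], [-1, 1]) : List ℤ × List ℤ) ∧
    ¬ Relation.ReflTransGen AllowedMove (([], []) : List ℤ × List ℤ)
      (([-1, 1], [-1, 1]) : List ℤ × List ℤ) := by
  have step : ∀ s s' : List ℤ × List ℤ, AllowedMove s s' → PosWeighted s → PosWeighted s' := by
    rintro s s' (rfl | ⟨h1, h2⟩ | ⟨h1, h2⟩ | ⟨h1, h2⟩) ⟨p1, p2⟩
    · exact ⟨p1, p2⟩
    · exact ⟨posL_insdel h1 p1, h2 ▸ p2⟩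
    · exact ⟨h1 ▸ p1, posL_insdel h2 p2⟩
    · exact ⟨posL_insdel h1 p1, posL_insdel h2 p2⟩
  have main : ∀ s s' : List ℤ × List ℤ, PosWeighted s →
      Relation.ReflTransGen AllowedMove s s' → PosWeighted s' := by
    intro s s' hs h
    induction h with
    | refl => exact hs
    | tail _ hm ih => exact step _ _ hm ih
  have triv : PosWeighted (([], []) : List ℤ × List ℤ) := by
    constructor <;> intro n <;> simp
  have nbad : ¬ PosWeighted (([-1, 1], [-1, 1]) : List ℤ × List ℤ) := by
    rintro ⟨h1, _⟩
    have := h1 1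
    norm_num at this
  exact ⟨main, triv, nbad, fun h => nbad (main _ _ triv h)⟩
end

section
/- Any generating set of oriented Reidemeister moves containing Ω3b as its only type-3 move must contain at least two Ω2 moves. Formally, in the positivity model: the set of positively-weighted two-component states is closed under the moves of S_b ∪ {Ω2a} ∪ {Ω2c} and under S_b ∪ {Ω2a} ∪ {Ω2d} (where S_b consists of all Ω1 moves and Ω3b), but Ω2b can take a positively weighted state to a non-positively-weighted one; hence neither set generates Ω2b. -/
/-- A move of `S_b ∪ {Ω2a} ∪ {Ω2c}`: all Ω1 moves and Ω3b fix both lists, Ω2a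
inserts/deletes a (+1,−1) pair in both lists, Ω2c does so in the second list only. -/
def MoveAC (s s' : List ℤ × List ℤ) : Prop :=
  (s' = s) ∨
  (InsDel s.1 s'.1 ∧ InsDel s.2 s'.2) ∨
  (s'.1 = s.1 ∧ InsDel s.2 s'.2)

/-- A move of `S_b ∪ {Ω2a} ∪ {Ω2d}`: all Ω1 moves and Ω3b fix both lists, Ω2a
inserts/deletes a (+1,−1) pair in both lists, Ω2d does so in the first list only. -/
def MoveAD (s s' : List ℤ × List ℤ) : Prop :=
  (s' = s) ∨
  (InsDel s.1 s'.1 ∧ InsDel s.2 s'.2) ∨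
  (InsDel s.1 s'.1 ∧ s'.2 = s.2)

/-- Positively weighted states are closed under the moves of `S_b ∪ {Ω2a, Ω2c}` and
of `S_b ∪ {Ω2a, Ω2d}`, but Ω2b takes the (positively weighted) trivial state to the
non-positively-weighted state `([−1,+1],[−1,+1])`; hence neither set generates Ω2b,
and any generating set with Ω3b as its only type-3 move has at least two Ω2 moves. -/
theorem stmt_14 :
    (∀ s s' : List ℤ × List ℤ, PosWeighted s → MoveAC s s' → PosWeighted s') ∧
    (∀ s s' : List ℤ × List ℤ, PosWeighted s → MoveAD s s' → PosWeighted s') ∧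
    PosWeighted (([], []) : List ℤ × List ℤ) ∧
    ¬ PosWeighted (([-1, 1], [-1, 1]) : List ℤ × List ℤ) ∧
    ¬ Relation.ReflTransGen MoveAC (([], []) : List ℤ × List ℤ)
        (([-1, 1], [-1, 1]) : List ℤ × List ℤ) ∧
    ¬ Relation.ReflTransGen MoveAD (([], []) : List ℤ × List ℤ)
        (([-1, 1], [-1, 1]) : List ℤ × List ℤ) := by
  have tas : ∀ (A C : List ℤ) (n : ℕ),
      ((A ++ C).take n).sum = (A.take n).sum + (C.take (n - A.length)).sum := by
    intro A C n; simp [List.take_append]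
  have key : ∀ {L L' : List ℤ}, InsDel L L' →
      (∀ n : ℕ, 0 ≤ (L.take n).sum) → (∀ n : ℕ, 0 ≤ (L'.take n).sum) := by
    rintro L L' (⟨A, B, rfl, rfl⟩ | ⟨A, B, rfl, rfl⟩) hp n
    · rw [List.append_assoc, tas, tas]
      rcases hm : n - A.length with _ | _ | m
      · have := hp n
        rw [tas, hm] at this
        simpa using this
      · have hA : 0 ≤ A.sum := by
          have := hp A.length
          rw [tas] at this
          simpa using this
        have hAn : (A.take n).sum = A.sum := by
          rw [List.take_of_length_le (by omega)]
        simp only [hAn]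
        simp
        omega
      · have := hp (A.length + m)
        rw [tas] at this
        have h1 : (A.take (A.length + m)).sum = A.sum := by
          rw [List.take_of_length_le (by omega)]
        have h2 : (A.take n).sum = A.sum := by
          rw [List.take_of_length_le (by omega)]
        have h3 : A.length + m - A.length = m := by omega
        rw [h1, h3] at this
        have e1 : (List.take (m + 1 + 1) [(1:ℤ), -1]).sum = 0 := by
          rw [List.take_of_length_le (by simp)]; decide
        have e2 : m + 1 + 1 - ([(1:ℤ), -1]).length = m := by simp
        rw [h2, e1, e2]
        omega
    · rw [tas]
      rcases le_or_gt n A.length with hn | hn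
      · have := hp n
        rw [List.append_assoc, tas] at this
        have h0 : n - A.length = 0 := by omega
        simpa [h0] using this
      · have := hp (n + 2)
        rw [List.append_assoc, tas] at this
        have h1 : (A.take (n + 2)).sum = A.sum := by
          rw [List.take_of_length_le (by omega)]
        have h2 : (A.take n).sum = A.sum := by
          rw [List.take_of_length_le (by omega)]
        have h3 : n + 2 - A.length = (n - A.length) + 2 := by omega
        rw [h1, h3, tas] at this
        have h4 : ([(1:ℤ), -1].take (n - A.length + 2)).sum = 0 := by
          rw [List.take_of_length_le (by simp)]
          decide
        have h5 : n - A.length + 2 - ([(1:ℤ), -1]).length = n - A.length := by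
          simp
        rw [h4, h5] at this
        rw [h2]
        omega
  have hAC : ∀ s s' : List ℤ × List ℤ, PosWeighted s → MoveAC s s' → PosWeighted s' := by
    rintro s s' ⟨h1, h2⟩ (rfl | ⟨ha, hb⟩ | ⟨ha, hb⟩)
    · exact ⟨h1, h2⟩
    · exact ⟨key ha h1, key hb h2⟩
    · exact ⟨ha ▸ h1, key hb h2⟩
  have hAD : ∀ s s' : List ℤ × List ℤ, PosWeighted s → MoveAD s s' → PosWeighted s' := by
    rintro s s' ⟨h1, h2⟩ (rfl | ⟨ha, hb⟩ | ⟨ha, hb⟩)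
    · exact ⟨h1, h2⟩
    · exact ⟨key ha h1, key hb h2⟩
    · exact ⟨key ha h1, hb ▸ h2⟩
  have htriv : PosWeighted (([], []) : List ℤ × List ℤ) := by
    constructor <;> intro n <;> simp
  have hbad : ¬ PosWeighted (([-1, 1], [-1, 1]) : List ℤ × List ℤ) := by
    rintro ⟨h1, -⟩
    have := h1 1
    norm_num at this
  have chainAC : ∀ t, Relation.ReflTransGen MoveAC (([], []) : List ℤ × List ℤ) t →
      PosWeighted t := by
    intro t h
    induction h with
    | refl => exact htriv
    | tail _ hstep ih => exact hAC _ _ ih hstep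
  have chainAD : ∀ t, Relation.ReflTransGen MoveAD (([], []) : List ℤ × List ℤ) t →
      PosWeighted t := by
    intro t h
    induction h with
    | refl => exact htriv
    | tail _ hstep ih => exact hAD _ _ ih hstep
  exact ⟨hAC, hAD, htriv, hbad, fun h => hbad (chainAC _ h), fun h => hbad (chainAD _ h)⟩
end
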